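/- For every τ in the upper half-plane and every z ∈ ℂ, the quadratic theta identity ϑ₂(τ)²·θ₄(z|τ)² - ϑ₄(τ)²·θ₂(z|τ)² = ϑ₃(τ)²·θ₁(z|τ)² holds. -/
import Mathlib
open Complex Real


/-- θ₁ via the sine series. -/
noncomputable def jtheta1 (z τ : ℂ) : ℂ :=
  2 * Complex.exp ((Real.pi : ℂ) * I * τ / 4) *
    ∑' k : ℕ, (-1 : ℂ) ^ k * Complex.exp (((k : ℂ) ^ 2 + (k : ℂ)) * (Real.pi : ℂ) * I * τ)
      * Complex.sin ((2 * (k : ℂ) + 1) * (Real.pi : ℂ) * z)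

/-- θ₂ via the cosine series. -/
noncomputable def jtheta2 (z τ : ℂ) : ℂ :=
  2 * Complex.exp ((Real.pi : ℂ) * I * τ / 4) *
    ∑' k : ℕ, Complex.exp (((k : ℂ) ^ 2 + (k : ℂ)) * (Real.pi : ℂ) * I * τ)
      * Complex.cos ((2 * (k : ℂ) + 1) * (Real.pi : ℂ) * z)

/-- θ₃ via the cosine series. -/
noncomputable def jtheta3 (z τ : ℂ) : ℂ :=
  1 + 2 * ∑' k : ℕ, Complex.exp (((k : ℂ) + 1) ^ 2 * (Real.pi : ℂ) * I * τ)
      * Complex.cos (2 * ((k : ℂ) + 1) * (Real.pi : ℂ) * z)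

/-- θ₄ via the cosine series. -/
noncomputable def jtheta4 (z τ : ℂ) : ℂ :=
  1 + 2 * ∑' k : ℕ, (-1 : ℂ) ^ (k + 1) * Complex.exp (((k : ℂ) + 1) ^ 2 * (Real.pi : ℂ) * I * τ)
      * Complex.cos (2 * ((k : ℂ) + 1) * (Real.pi : ℂ) * z)


namespace QTI

noncomputable def c3 (z τ : ℂ) (n : ℤ) : ℂ := jacobiTheta₂_term n z τ

noncomputable def c2 (z τ : ℂ) (n : ℤ) : ℂ :=
  cexp ((↑π : ℂ) * I * τ / 4 + (↑π : ℂ) * I * z) * jacobiTheta₂_term n (z + τ / 2) τ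

lemma c3_apply (z τ : ℂ) (n : ℤ) :
    c3 z τ n = cexp (2 * (↑π : ℂ) * I * n * z + (↑π : ℂ) * I * n ^ 2 * τ) := rfl

lemma c2_apply (z τ : ℂ) (n : ℤ) :
    c2 z τ n = cexp ((↑π : ℂ) * I * τ * ((n : ℂ) + 1 / 2) ^ 2
      + 2 * (↑π : ℂ) * I * ((n : ℂ) + 1 / 2) * z) := by
  rw [c2, jacobiTheta₂_term, ← Complex.exp_add]
  congr 1
  ring

lemma summable_norm_c3 (z : ℂ) {τ : ℂ} (hτ : 0 < τ.im) :
    Summable fun n : ℤ => ‖c3 z τ n‖ := by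
  rw [summable_norm_iff]
  exact (summable_jacobiTheta₂_term_iff z τ).mpr hτ

lemma summable_norm_c2 (z : ℂ) {τ : ℂ} (hτ : 0 < τ.im) :
    Summable fun n : ℤ => ‖c2 z τ n‖ := by
  simp only [c2, norm_mul]
  exact (summable_norm_c3 (z + τ / 2) hτ).mul_left _

noncomputable def TT3 (z τ : ℂ) : ℂ := ∑' n : ℤ, c3 z τ n
noncomputable def TT2 (z τ : ℂ) : ℂ := ∑' n : ℤ, c2 z τ n


section Split
open Function

def φeq : ℤ × ℤ → ℤ × ℤ := fun p => (p.1 + p.2, p.1 - p.2)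
def ψeq : ℤ × ℤ → ℤ × ℤ := fun p => (p.1 + p.2 + 1, p.1 - p.2)

lemma φeq_inj : Function.Injective φeq := by
  intro a b h
  simp only [φeq, Prod.ext_iff] at h ⊢
  omega

lemma ψeq_inj : Function.Injective ψeq := by
  intro a b h
  simp only [ψeq, Prod.ext_iff] at h ⊢
  omega

lemma φψ_compl : IsCompl (Set.range φeq) (Set.range ψeq) := by
  constructor
  · rw [disjoint_iff_inf_le]
    rintro ⟨r, s⟩ ⟨⟨⟨u, v⟩, ha⟩, ⟨⟨u', v'⟩, hb⟩⟩
    simp only [φeq, ψeq, Prod.ext_iff] at ha hb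
    omega
  · rw [codisjoint_iff_le_sup]
    rintro ⟨r, s⟩ -
    rcases Int.even_or_odd (r + s) with ⟨u, hu⟩ | ⟨u, hu⟩
    · exact Or.inl ⟨(u, r - u), by simp only [φeq, Prod.ext_iff]; omega⟩
    · exact Or.inr ⟨(u, r - 1 - u), by simp only [ψeq, Prod.ext_iff]; omega⟩

lemma hasSum_split {F : ℤ × ℤ → ℂ} {a b : ℂ}
    (h1 : HasSum (F ∘ φeq) a) (h2 : HasSum (F ∘ ψeq) b) : HasSum F (a + b) :=
  (φeq_inj.hasSum_range_iff.mpr h1).add_isCompl φψ_compl (ψeq_inj.hasSum_range_iff.mpr h2)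

lemma hasSum_mulPair {f g : ℤ → ℂ} (hf : Summable fun n => ‖f n‖)
    (hg : Summable fun n => ‖g n‖) :
    HasSum (fun p : ℤ × ℤ => f p.1 * g p.2) ((∑' n, f n) * ∑' n, g n) :=
  (tsum_mul_tsum_of_summable_norm hf hg) ▸ (summable_mul_of_summable_norm hf hg).hasSum

end Split
lemma im_two_mul {τ : ℂ} (hτ : 0 < τ.im) : 0 < (2 * τ).im := by
  simp only [Complex.mul_im]
  simp
  linarith

lemma I3 (z : ℂ) {τ : ℂ} (hτ : 0 < τ.im) :
    TT3 z τ ^ 2 = TT3 (2 * z) (2 * τ) * TT3 0 (2 * τ)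
      + TT2 (2 * z) (2 * τ) * TT2 0 (2 * τ) := by
  have h2τ := im_two_mul hτ
  have hn := summable_norm_c3 z hτ
  have key : HasSum (fun p : ℤ × ℤ => c3 z τ p.1 * c3 z τ p.2)
      (TT3 (2 * z) (2 * τ) * TT3 0 (2 * τ) + TT2 (2 * z) (2 * τ) * TT2 0 (2 * τ)) := by
    apply hasSum_split
    · have h := hasSum_mulPair (summable_norm_c3 (2 * z) h2τ) (summable_norm_c3 0 h2τ)
      have e : ((fun p : ℤ × ℤ => c3 z τ p.1 * c3 z τ p.2) ∘ φeq)
          = fun p : ℤ × ℤ => c3 (2 * z) (2 * τ) p.1 * c3 0 (2 * τ) p.2 := by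
        funext p
        simp only [Function.comp, φeq, c3_apply, ← Complex.exp_add]
        congr 1
        push_cast
        ring
      rw [e]
      exact h
    · have h := hasSum_mulPair (summable_norm_c2 (2 * z) h2τ) (summable_norm_c2 0 h2τ)
      have e : ((fun p : ℤ × ℤ => c3 z τ p.1 * c3 z τ p.2) ∘ ψeq)
          = fun p : ℤ × ℤ => c2 (2 * z) (2 * τ) p.1 * c2 0 (2 * τ) p.2 := by
        funext p
        simp only [Function.comp, ψeq, c3_apply, c2_apply, ← Complex.exp_add]
        congr 1
        push_cast
        ring
      rw [e]
      exact h
  rw [TT3, sq, tsum_mul_tsum_of_summable_norm hn hn]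
  exact key.tsum_eq

lemma I2 (z : ℂ) {τ : ℂ} (hτ : 0 < τ.im) :
    TT2 z τ ^ 2 = TT2 (2 * z) (2 * τ) * TT3 0 (2 * τ)
      + TT3 (2 * z) (2 * τ) * TT2 0 (2 * τ) := by
  have h2τ := im_two_mul hτ
  have hn := summable_norm_c2 z hτ
  have key : HasSum (fun p : ℤ × ℤ => c2 z τ p.1 * c2 z τ p.2)
      (TT2 (2 * z) (2 * τ) * TT3 0 (2 * τ) + TT3 (2 * z) (2 * τ) * TT2 0 (2 * τ)) := by
    apply hasSum_split
    · have h := hasSum_mulPair (summable_norm_c2 (2 * z) h2τ) (summable_norm_c3 0 h2τ)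
      have e : ((fun p : ℤ × ℤ => c2 z τ p.1 * c2 z τ p.2) ∘ φeq)
          = fun p : ℤ × ℤ => c2 (2 * z) (2 * τ) p.1 * c3 0 (2 * τ) p.2 := by
        funext p
        simp only [Function.comp, φeq, c3_apply, c2_apply, ← Complex.exp_add]
        congr 1
        push_cast
        ring
      rw [e]
      exact h
    · have h := hasSum_mulPair (summable_norm_c3 (2 * z) h2τ) (summable_norm_c2 0 h2τ)
      have h' := (Equiv.hasSum_iff
        (Equiv.prodCongr (Equiv.addRight (1 : ℤ)) (Equiv.refl ℤ))).mpr h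
      have e : ((fun p : ℤ × ℤ => c2 z τ p.1 * c2 z τ p.2) ∘ ψeq)
          = (fun p : ℤ × ℤ => c3 (2 * z) (2 * τ) p.1 * c2 0 (2 * τ) p.2)
            ∘ (Equiv.prodCongr (Equiv.addRight (1 : ℤ)) (Equiv.refl ℤ)) := by
        funext p
        simp only [Function.comp, ψeq, Equiv.prodCongr_apply, Equiv.coe_addRight,
          Equiv.refl_apply, Prod.map, c3_apply, c2_apply, ← Complex.exp_add]
        congr 1
        push_cast
        ring
      rw [e]
      exact h'
  rw [TT2, sq, tsum_mul_tsum_of_summable_norm hn hn]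
  exact key.tsum_eq

lemma TT3_add_one (z τ : ℂ) : TT3 (z + 1) τ = TT3 z τ := by
  refine tsum_congr fun n => ?_
  have h : c3 (z + 1) τ n = c3 z τ n * cexp ((n : ℂ) * (2 * (↑π : ℂ) * I)) := by
    rw [c3_apply, c3_apply, ← Complex.exp_add]
    congr 1
    ring
  rw [h, Complex.exp_int_mul_two_pi_mul_I, mul_one]

lemma TT2_add_one (z τ : ℂ) : TT2 (z + 1) τ = -TT2 z τ := by
  rw [TT2, TT2, ← tsum_neg]
  refine tsum_congr fun n => ?_
  have h : c2 (z + 1) τ n = c2 z τ n * (cexp ((n : ℂ) * (2 * (↑π : ℂ) * I)) * cexp ((↑π : ℂ) * I)) := by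
    rw [c2_apply, c2_apply, ← Complex.exp_add, ← Complex.exp_add]
    congr 1
    ring
  rw [h, Complex.exp_int_mul_two_pi_mul_I, Complex.exp_pi_mul_I]
  ring
lemma exp_pi_div_two_mul_I : cexp ((↑π : ℂ) * I / 2) = I := by
  rw [show (↑π : ℂ) * I / 2 = ((π / 2 : ℝ) : ℂ) * I by push_cast; ring, Complex.exp_mul_I,
    ← Complex.ofReal_cos, ← Complex.ofReal_sin, Real.cos_pi_div_two, Real.sin_pi_div_two]
  simp

lemma exp_nat_pi (k : ℕ) : cexp ((k : ℂ) * ((↑π : ℂ) * I)) = (-1 : ℂ) ^ k := by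
  rw [Complex.exp_nat_mul, Complex.exp_pi_mul_I]

lemma exp_nat_pi' (k : ℕ) : cexp (-((k : ℂ) * ((↑π : ℂ) * I))) = (-1 : ℂ) ^ k := by
  rw [Complex.exp_neg, exp_nat_pi, ← inv_pow, inv_neg, inv_one]

lemma c3_zero_eq_one (z τ : ℂ) : c3 z τ 0 = 1 := by
  rw [c3_apply]
  simp

lemma summable_c3_nat (z : ℂ) {τ : ℂ} (hτ : 0 < τ.im) :
    Summable (fun k : ℕ => c3 z τ k) :=
  ((summable_norm_c3 z hτ).of_norm).comp_injective (fun a b h => by omega)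

lemma summable_c3_succ (z : ℂ) {τ : ℂ} (hτ : 0 < τ.im) :
    Summable (fun k : ℕ => c3 z τ ((k : ℤ) + 1)) :=
  ((summable_norm_c3 z hτ).of_norm).comp_injective (fun a b h => by omega)

lemma summable_c3_neg (z : ℂ) {τ : ℂ} (hτ : 0 < τ.im) :
    Summable (fun k : ℕ => c3 z τ (-((k : ℤ) + 1))) :=
  ((summable_norm_c3 z hτ).of_norm).comp_injective (fun a b h => by omega)

lemma TT3_split (z : ℂ) {τ : ℂ} (hτ : 0 < τ.im) :
    TT3 z τ = 1 + ∑' k : ℕ, (c3 z τ ((k : ℤ) + 1) + c3 z τ (-((k : ℤ) + 1))) := by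
  rw [TT3, tsum_of_nat_of_neg_add_one (summable_c3_nat z hτ) (summable_c3_neg z hτ),
    Summable.tsum_eq_zero_add (summable_c3_nat z hτ)]
  have h0 : c3 z τ ((0 : ℕ) : ℤ) = 1 := by rw [show ((0:ℕ):ℤ) = 0 by norm_num, c3_zero_eq_one]
  rw [h0, Summable.tsum_add (summable_c3_succ z hτ) (summable_c3_neg z hτ), add_assoc]
  congr 2
lemma TT2_split (z : ℂ) {τ : ℂ} (hτ : 0 < τ.im) :
    TT2 z τ = ∑' k : ℕ, (c2 z τ (k : ℤ) + c2 z τ (-((k : ℤ) + 1))) := by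
  rw [TT2, ← tsum_nat_add_neg_add_one ((summable_norm_c2 z hτ).of_norm)]

lemma jtheta3_eq (z : ℂ) {τ : ℂ} (hτ : 0 < τ.im) : jtheta3 z τ = TT3 z τ := by
  rw [jtheta3, TT3_split z hτ]
  congr 1
  rw [← tsum_mul_left]
  refine tsum_congr fun k => ?_
  have h1 : c3 z τ ((k : ℤ) + 1) = cexp (((k : ℂ) + 1) ^ 2 * (↑π : ℂ) * I * τ)
      * cexp ((2 * ((k : ℂ) + 1) * (↑π : ℂ) * z) * I) := by
    rw [c3_apply, ← Complex.exp_add]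
    congr 1
    push_cast
    ring
  have h2 : c3 z τ (-((k : ℤ) + 1)) = cexp (((k : ℂ) + 1) ^ 2 * (↑π : ℂ) * I * τ)
      * cexp (-((2 * ((k : ℂ) + 1) * (↑π : ℂ) * z) * I)) := by
    rw [c3_apply, ← Complex.exp_add]
    congr 1
    push_cast
    ring
  rw [h1, h2, Complex.cos]
  ring

lemma jtheta4_eq (z : ℂ) {τ : ℂ} (hτ : 0 < τ.im) : jtheta4 z τ = TT3 (z + 1 / 2) τ := by
  rw [jtheta4, TT3_split (z + 1 / 2) hτ]
  congr 1
  rw [← tsum_mul_left]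
  refine tsum_congr fun k => ?_
  have hs1 : ((-1 : ℂ)) ^ (k + 1) = cexp (((k : ℂ) + 1) * ((↑π : ℂ) * I)) := by
    rw [show ((k : ℂ) + 1) = ((k + 1 : ℕ) : ℂ) by push_cast; ring, exp_nat_pi]
  have hs2 : ((-1 : ℂ)) ^ (k + 1) = cexp (-(((k : ℂ) + 1) * ((↑π : ℂ) * I))) := by
    rw [show ((k : ℂ) + 1) = ((k + 1 : ℕ) : ℂ) by push_cast; ring, exp_nat_pi']
  have h1 : c3 (z + 1 / 2) τ ((k : ℤ) + 1) = (-1 : ℂ) ^ (k + 1)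
      * (cexp (((k : ℂ) + 1) ^ 2 * (↑π : ℂ) * I * τ)
        * cexp ((2 * ((k : ℂ) + 1) * (↑π : ℂ) * z) * I)) := by
    rw [c3_apply, hs1, ← Complex.exp_add, ← Complex.exp_add]
    congr 1
    push_cast
    ring
  have h2 : c3 (z + 1 / 2) τ (-((k : ℤ) + 1)) = (-1 : ℂ) ^ (k + 1)
      * (cexp (((k : ℂ) + 1) ^ 2 * (↑π : ℂ) * I * τ)
        * cexp (-((2 * ((k : ℂ) + 1) * (↑π : ℂ) * z) * I))) := by
    rw [c3_apply, hs2, ← Complex.exp_add, ← Complex.exp_add]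
    congr 1
    push_cast
    ring
  rw [h1, h2, Complex.cos]
  ring

lemma jtheta2_eq (z : ℂ) {τ : ℂ} (hτ : 0 < τ.im) : jtheta2 z τ = TT2 z τ := by
  rw [jtheta2, TT2_split z hτ]
  have hterm : ∀ k : ℕ, c2 z τ (k : ℤ) + c2 z τ (-((k : ℤ) + 1))
      = (2 * cexp ((↑π : ℂ) * I * τ / 4))
        * (cexp (((k : ℂ) ^ 2 + (k : ℂ)) * (↑π : ℂ) * I * τ)
          * Complex.cos ((2 * (k : ℂ) + 1) * (↑π : ℂ) * z)) := by
    intro k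
    have h1 : c2 z τ (k : ℤ) = cexp ((↑π : ℂ) * I * τ / 4)
        * (cexp (((k : ℂ) ^ 2 + (k : ℂ)) * (↑π : ℂ) * I * τ)
          * cexp (((2 * (k : ℂ) + 1) * (↑π : ℂ) * z) * I)) := by
      rw [c2_apply, ← Complex.exp_add, ← Complex.exp_add]
      congr 1
      push_cast
      ring
    have h2 : c2 z τ (-((k : ℤ) + 1)) = cexp ((↑π : ℂ) * I * τ / 4)
        * (cexp (((k : ℂ) ^ 2 + (k : ℂ)) * (↑π : ℂ) * I * τ)
          * cexp (-(((2 * (k : ℂ) + 1) * (↑π : ℂ) * z) * I))) := by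
      rw [c2_apply, ← Complex.exp_add, ← Complex.exp_add]
      congr 1
      push_cast
      ring
    rw [h1, h2, Complex.cos]
    ring
  rw [tsum_congr hterm, tsum_mul_left, mul_assoc]

lemma jtheta1_eq (z : ℂ) {τ : ℂ} (hτ : 0 < τ.im) : jtheta1 z τ = -TT2 (z + 1 / 2) τ := by
  rw [jtheta1, TT2_split (z + 1 / 2) hτ, ← tsum_neg]
  have hterm : ∀ k : ℕ, -(c2 (z + 1 / 2) τ (k : ℤ) + c2 (z + 1 / 2) τ (-((k : ℤ) + 1)))
      = (2 * cexp ((↑π : ℂ) * I * τ / 4))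
        * ((-1 : ℂ) ^ k * cexp (((k : ℂ) ^ 2 + (k : ℂ)) * (↑π : ℂ) * I * τ)
          * Complex.sin ((2 * (k : ℂ) + 1) * (↑π : ℂ) * z)) := by
    intro k
    have hs1 : ((-1 : ℂ)) ^ k * I = cexp ((2 * (k : ℂ) + 1) * ((↑π : ℂ) * I) / 2) := by
      rw [show (2 * (k : ℂ) + 1) * ((↑π : ℂ) * I) / 2
          = (k : ℂ) * ((↑π : ℂ) * I) + (↑π : ℂ) * I / 2 by ring,
        Complex.exp_add, exp_nat_pi, exp_pi_div_two_mul_I]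
    have hs2 : ((-1 : ℂ)) ^ k * (-I) = cexp (-((2 * (k : ℂ) + 1) * ((↑π : ℂ) * I) / 2)) := by
      rw [Complex.exp_neg, ← hs1, mul_inv, ← inv_pow, inv_neg, inv_one, Complex.inv_I]
    have h1 : c2 (z + 1 / 2) τ (k : ℤ) = ((-1 : ℂ) ^ k * I)
        * (cexp ((↑π : ℂ) * I * τ / 4)
          * (cexp (((k : ℂ) ^ 2 + (k : ℂ)) * (↑π : ℂ) * I * τ)
            * cexp (((2 * (k : ℂ) + 1) * (↑π : ℂ) * z) * I))) := by
      rw [c2_apply, hs1, ← Complex.exp_add, ← Complex.exp_add, ← Complex.exp_add]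
      congr 1
      push_cast
      ring
    have h2 : c2 (z + 1 / 2) τ (-((k : ℤ) + 1)) = ((-1 : ℂ) ^ k * (-I))
        * (cexp ((↑π : ℂ) * I * τ / 4)
          * (cexp (((k : ℂ) ^ 2 + (k : ℂ)) * (↑π : ℂ) * I * τ)
            * cexp (-(((2 * (k : ℂ) + 1) * (↑π : ℂ) * z) * I)))) := by
      rw [c2_apply, hs2, ← Complex.exp_add, ← Complex.exp_add, ← Complex.exp_add]
      congr 1
      push_cast
      ring
    rw [h1, h2, Complex.sin]
    ring
  rw [tsum_congr hterm, tsum_mul_left, mul_assoc]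

end QTI

theorem quadratic_theta_identity_24 (τ : ℂ) (hτ : 0 < τ.im) (z : ℂ) :
    jtheta2 0 τ ^ 2 * jtheta4 z τ ^ 2 - jtheta4 0 τ ^ 2 * jtheta2 z τ ^ 2
      = jtheta3 0 τ ^ 2 * jtheta1 z τ ^ 2 := by
  have e2_0 : jtheta2 0 τ ^ 2
      = QTI.TT2 0 (2 * τ) * QTI.TT3 0 (2 * τ) + QTI.TT3 0 (2 * τ) * QTI.TT2 0 (2 * τ) := by
    rw [QTI.jtheta2_eq 0 hτ, QTI.I2 0 hτ, mul_zero]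
  have e3_0 : jtheta3 0 τ ^ 2
      = QTI.TT3 0 (2 * τ) * QTI.TT3 0 (2 * τ) + QTI.TT2 0 (2 * τ) * QTI.TT2 0 (2 * τ) := by
    rw [QTI.jtheta3_eq 0 hτ, QTI.I3 0 hτ, mul_zero]
  have e4 : jtheta4 z τ ^ 2
      = QTI.TT3 (2 * z) (2 * τ) * QTI.TT3 0 (2 * τ)
        + -QTI.TT2 (2 * z) (2 * τ) * QTI.TT2 0 (2 * τ) := by
    rw [QTI.jtheta4_eq z hτ, QTI.I3 (z + 1 / 2) hτ,
      show 2 * (z + 1 / 2) = 2 * z + 1 by ring, QTI.TT3_add_one, QTI.TT2_add_one]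
  have e4_0 : jtheta4 0 τ ^ 2
      = QTI.TT3 0 (2 * τ) * QTI.TT3 0 (2 * τ)
        + -QTI.TT2 0 (2 * τ) * QTI.TT2 0 (2 * τ) := by
    rw [QTI.jtheta4_eq 0 hτ, QTI.I3 ((0 : ℂ) + 1 / 2) hτ,
      show 2 * ((0 : ℂ) + 1 / 2) = 0 + 1 by ring, QTI.TT3_add_one, QTI.TT2_add_one]
  have e2 : jtheta2 z τ ^ 2
      = QTI.TT2 (2 * z) (2 * τ) * QTI.TT3 0 (2 * τ)
        + QTI.TT3 (2 * z) (2 * τ) * QTI.TT2 0 (2 * τ) := by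
    rw [QTI.jtheta2_eq z hτ, QTI.I2 z hτ]
  have e1 : jtheta1 z τ ^ 2
      = -QTI.TT2 (2 * z) (2 * τ) * QTI.TT3 0 (2 * τ)
        + QTI.TT3 (2 * z) (2 * τ) * QTI.TT2 0 (2 * τ) := by
    rw [QTI.jtheta1_eq z hτ, neg_pow, QTI.I2 (z + 1 / 2) hτ,
      show 2 * (z + 1 / 2) = 2 * z + 1 by ring, QTI.TT3_add_one, QTI.TT2_add_one]
    ring
  rw [e2_0, e3_0, e4, e4_0, e2, e1]
  ring
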